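/- arXiv:2309.15763 — 2 statements merged into one kernel-verified Lean document; each statement's English description precedes it below -/
import Mathlib

section
/- (Completeness of JNoC_CS for NoC subset models) Let CS be an arbitrary constant specification for JNoC. For every formula F, if F is NoC CS-valid then JNoC_CS ⊢ F. -/
/-- Justification terms: constants, variables, application, sum, bang. -/
inductive Tm : Type
  | const : Nat → Tm
  | var   : Nat → Tm
  | app   : Tm → Tm → Tm
  | sum   : Tm → Tm → Tm
  | bang  : Tm → Tm

/-- Formulas of justification logic. -/
inductive Fm : Type
  | prop : Nat → Fm
  | bot  : Fm
  | imp  : Fm → Fm → Fm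
  | just : Tm → Fm → Fm

/-- ¬A := A → ⊥ -/
def Fm.neg (A : Fm) : Fm := Fm.imp A Fm.bot
/-- ⊤ := ¬⊥ -/
def Fm.top : Fm := Fm.neg Fm.bot
/-- A ∨ B := ¬A → B -/
def Fm.disj (A B : Fm) : Fm := Fm.imp (Fm.neg A) B
/-- A ∧ B := ¬(A → ¬B) -/
def Fm.conj (A B : Fm) : Fm := Fm.neg (Fm.imp A (Fm.neg B))

/-- A classical propositional tautology in this language: true under every
Boolean valuation that respects ⊥ and →, treating `t:F` and atoms as arbitrary atoms. -/
def IsTaut (A : Fm) : Prop :=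
  ∀ v : Fm → Bool,
    v Fm.bot = false →
    (∀ F G : Fm, v (Fm.imp F G) = (!(v F) || v G)) →
    v A = true

/-- !^n t -/
def bangIter : Nat → Tm → Tm
  | 0, t => t
  | n + 1, t => Tm.bang (bangIter n t)

/-- `anFm n c A` is the formula !^n c : !^{n-1} c : ... : !c : c : A. -/
def anFm : Nat → Tm → Fm → Fm
  | 0, c, A => Fm.just c A
  | n + 1, c, A => Fm.just (bangIter (n + 1) c) (anFm n c A)

/-- Axioms of JD: classical tautologies, j+, j, jd. -/
inductive JDAxiom : Fm → Prop
  | cl {A : Fm} : IsTaut A → JDAxiom A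
  | jplus (s t : Tm) (A : Fm) :
      JDAxiom (Fm.imp (Fm.disj (Fm.just s A) (Fm.just t A)) (Fm.just (Tm.sum s t) A))
  | j (s t : Tm) (A B : Fm) :
      JDAxiom (Fm.imp (Fm.just s (Fm.imp A B)) (Fm.imp (Fm.just t A) (Fm.just (Tm.app s t) B)))
  | jd (t : Tm) : JDAxiom (Fm.neg (Fm.just t Fm.bot))

/-- Axioms of JNoC: classical tautologies, j+, j, noc. -/
inductive JNoCAxiom : Fm → Prop
  | cl {A : Fm} : IsTaut A → JNoCAxiom A
  | jplus (s t : Tm) (A : Fm) :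
      JNoCAxiom (Fm.imp (Fm.disj (Fm.just s A) (Fm.just t A)) (Fm.just (Tm.sum s t) A))
  | j (s t : Tm) (A B : Fm) :
      JNoCAxiom (Fm.imp (Fm.just s (Fm.imp A B)) (Fm.imp (Fm.just t A) (Fm.just (Tm.app s t) B)))
  | noc (t : Tm) (A : Fm) :
      JNoCAxiom (Fm.neg (Fm.conj (Fm.just t A) (Fm.just t (Fm.neg A))))

/-- A constant specification for the logic with axioms `Ax`: a set of pairs (c, A)
where c is (the index of) a constant and A is an axiom. -/
def IsConstSpec (Ax : Fm → Prop) (CS : Set (Nat × Fm)) : Prop :=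
  ∀ p ∈ CS, Ax p.2

/-- CS is axiomatically appropriate: every axiom is justified by some constant. -/
def AxAppropriate (Ax : Fm → Prop) (CS : Set (Nat × Fm)) : Prop :=
  ∀ A : Fm, Ax A → ∃ c : Nat, (c, A) ∈ CS

/-- Hilbert-style derivability from axioms `Ax`, modus ponens, and axiom necessitation. -/
inductive Deriv (Ax : Fm → Prop) (CS : Set (Nat × Fm)) : Fm → Prop
  | ax {A : Fm} : Ax A → Deriv Ax CS A
  | mp {A B : Fm} : Deriv Ax CS (Fm.imp A B) → Deriv Ax CS A → Deriv Ax CS B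
  | an {c : Nat} {A : Fm} (n : Nat) : (c, A) ∈ CS → Deriv Ax CS (anFm n (Tm.const c) A)

/-- A subset-model frame: worlds, normal worlds, valuation, evidence function. -/
structure SModel where
  W : Type
  W0 : Set W
  V : W → Fm → Prop
  E : W → Tm → Set W

/-- Truth set [A]. -/
def SModel.ts (M : SModel) (A : Fm) : Set M.W := {w : M.W | M.V w A}

/-- APP_ω(s,t). -/
def SModel.APP (M : SModel) (ω : M.W) (s t : Tm) : Set Fm :=
  {F : Fm | ∃ H : Fm, M.E ω s ⊆ M.ts (Fm.imp H F) ∧ M.E ω t ⊆ M.ts H}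

/-- The conditions common to general, D-arbitrary and NoC CS-subset models. -/
def CoreConds (CS : Set (Nat × Fm)) (M : SModel) : Prop :=
  M.W0.Nonempty ∧
  ∀ ω ∈ M.W0,
    (¬ M.V ω Fm.bot) ∧
    (∀ F G : Fm, M.V ω (Fm.imp F G) ↔ (¬ M.V ω F ∨ M.V ω G)) ∧
    (∀ (t : Tm) (F : Fm), M.V ω (Fm.just t F) ↔ M.E ω t ⊆ M.ts F) ∧
    (∀ s t : Tm, M.E ω (Tm.sum s t) ⊆ M.E ω s ∩ M.E ω t) ∧
    (∀ s t : Tm, M.E ω (Tm.app s t) ⊆ {υ : M.W | ∀ F ∈ M.APP ω s t, υ ∈ M.ts F}) ∧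
    (∀ (c : Nat) (A : Fm), (c, A) ∈ CS →
      M.E ω (Tm.const c) ⊆ M.ts A ∧
      ∀ n : Nat, M.E ω (bangIter (n + 1) (Tm.const c)) ⊆ M.ts (anFm n (Tm.const c) A))

/-- General CS-subset model: every E(ω,t) meets the normal worlds. -/
def IsGeneralModel (CS : Set (Nat × Fm)) (M : SModel) : Prop :=
  CoreConds CS M ∧ ∀ ω ∈ M.W0, ∀ t : Tm, ∃ υ ∈ M.W0, υ ∈ M.E ω t

/-- D-arbitrary CS-subset model: every E(ω,t) meets W_{¬⊥}. -/
def IsDArbModel (CS : Set (Nat × Fm)) (M : SModel) : Prop :=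
  CoreConds CS M ∧ ∀ ω ∈ M.W0, ∀ t : Tm, ∃ υ : M.W, ¬ M.V υ Fm.bot ∧ υ ∈ M.E ω t

/-- NoC CS-subset model: every E(ω,t) meets W_nc. -/
def IsNoCModel (CS : Set (Nat × Fm)) (M : SModel) : Prop :=
  CoreConds CS M ∧ ∀ ω ∈ M.W0, ∀ t : Tm,
    ∃ υ : M.W, (∀ A : Fm, ¬ M.V υ A ∨ ¬ M.V υ (Fm.neg A)) ∧ υ ∈ M.E ω t

def GeneralValid (CS : Set (Nat × Fm)) (F : Fm) : Prop :=
  ∀ M : SModel, IsGeneralModel CS M → ∀ ω ∈ M.W0, M.V ω F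

def DArbValid (CS : Set (Nat × Fm)) (F : Fm) : Prop :=
  ∀ M : SModel, IsDArbModel CS M → ∀ ω ∈ M.W0, M.V ω F

def NoCValid (CS : Set (Nat × Fm)) (F : Fm) : Prop :=
  ∀ M : SModel, IsNoCModel CS M → ∀ ω ∈ M.W0, M.V ω F

/-- Γ is consistent: no finite list of members of Γ lets the logic derive ⊥
(i.e. A₁ → ... → Aₙ → ⊥ is not derivable for A₁,...,Aₙ ∈ Γ). -/
def ConsistentSet (Ax : Fm → Prop) (CS : Set (Nat × Fm)) (Γ : Set Fm) : Prop :=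
  ¬ ∃ L : List Fm, (∀ A ∈ L, A ∈ Γ) ∧ Deriv Ax CS (L.foldr Fm.imp Fm.bot)

/-- Maximal consistent: consistent and every proper superset is inconsistent. -/
def MaxConsistent (Ax : Fm → Prop) (CS : Set (Nat × Fm)) (Γ : Set Fm) : Prop :=
  ConsistentSet Ax CS Γ ∧ ∀ Δ : Set Fm, Γ ⊂ Δ → ¬ ConsistentSet Ax CS Δ

/-- The canonical model: worlds are arbitrary sets of formulas, normal worlds are
the maximal consistent sets, V^C(Γ,F)=1 iff F ∈ Γ, E^C(Γ,t) = {Δ : Δ ⊇ Γ/t}. -/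
def canonicalModel (Ax : Fm → Prop) (CS : Set (Nat × Fm)) : SModel where
  W := Set Fm
  W0 := {Γ : Set Fm | MaxConsistent Ax CS Γ}
  V := fun Γ F => F ∈ Γ
  E := fun Γ t => {Δ : Set Fm | {F : Fm | Fm.just t F ∈ Γ} ⊆ Δ}

-- auxiliary development (to be inserted above stmt_7)
section Completeness

deriving instance DecidableEq for Tm
deriving instance DecidableEq for Fm

variable (CS : Set (Nat × Fm))

instance (Ax : Fm → Prop) (CS : Set (Nat × Fm)) :
    Membership Fm (canonicalModel Ax CS).W :=
  inferInstanceAs (Membership Fm (Set Fm))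

instance (Ax : Fm → Prop) (CS : Set (Nat × Fm)) :
    HasSubset ((canonicalModel Ax CS).W) :=
  ⟨Set.Subset⟩

/-- Boolean evaluation witnessing consistency of JNoC. -/
def evA : Fm → Bool
  | Fm.prop _ => true
  | Fm.bot => false
  | Fm.imp A B => !(evA A) || evA B
  | Fm.just _ F => evA F

lemma evA_anFm (n : Nat) (c : Tm) (A : Fm) : evA (anFm n c A) = evA A := by
  induction n with
  | zero => rfl
  | succ n ih => simp [anFm, evA, ih]

lemma evA_ax {A : Fm} (h : JNoCAxiom A) : evA A = true := by
  cases h with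
  | cl h => exact h evA rfl (fun F G => rfl)
  | jplus s t A => simp only [Fm.disj, Fm.neg, evA]; cases evA A <;> rfl
  | j s t A B => simp only [evA]; cases evA A <;> cases evA B <;> rfl
  | noc t A => simp only [Fm.neg, Fm.conj, evA]; cases evA A <;> rfl

lemma evA_deriv (hCS : IsConstSpec JNoCAxiom CS) {A : Fm}
    (h : Deriv JNoCAxiom CS A) : evA A = true := by
  induction h with
  | ax h => exact evA_ax h
  | mp h1 h2 ih1 ih2 =>
      simp only [evA, ih2, Bool.not_true, Bool.false_or] at ih1; exact ih1
  | an n hc => rw [evA_anFm]; exact evA_ax (hCS _ hc)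

/-- Derivability from a set of hypotheses. -/
abbrev SD (Γ : Set Fm) (A : Fm) : Prop :=
  ∃ L : List Fm, (∀ x ∈ L, x ∈ Γ) ∧ Deriv JNoCAxiom CS (L.foldr Fm.imp A)

lemma foldr_eval (v : Fm → Bool) (himp : ∀ F G, v (Fm.imp F G) = (!(v F) || v G))
    (L : List Fm) (B : Fm) :
    v (L.foldr Fm.imp B) = true ↔ ((∀ x ∈ L, v x = true) → v B = true) := by
  induction L with
  | nil => simp
  | cons a L ih =>
    simp only [List.foldr_cons, himp, List.mem_cons]
    cases ha : v a with
    | false =>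
      simp only [Bool.not_false, Bool.true_or, true_iff]
      intro hall
      have := hall a (Or.inl rfl)
      rw [ha] at this; exact absurd this (by simp)
    | true =>
      simp only [Bool.not_true, Bool.false_or]
      rw [ih]
      constructor
      · intro h1 h2; exact h1 fun x hx => h2 x (Or.inr hx)
      · intro h1 h2
        apply h1
        intro x hx
        rcases hx with rfl | hx
        · exact ha
        · exact h2 x hx

lemma taut_weaken {L M : List Fm} (B : Fm) (hsub : ∀ x ∈ L, x ∈ M) :
    IsTaut (Fm.imp (L.foldr Fm.imp B) (M.foldr Fm.imp B)) := by
  intro v hb hi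
  rw [hi]
  cases hL : v (L.foldr Fm.imp B) with
  | false => rfl
  | true =>
    have h1 := (foldr_eval v hi L B).mp hL
    have h2 : v (M.foldr Fm.imp B) = true :=
      (foldr_eval v hi M B).mpr fun hM => h1 fun x hx => hM x (hsub x hx)
    rw [h2]; rfl

lemma taut_foldr_mp (L : List Fm) (A B : Fm) :
    IsTaut (Fm.imp (L.foldr Fm.imp (Fm.imp A B))
      (Fm.imp (L.foldr Fm.imp A) (L.foldr Fm.imp B))) := by
  intro v hb hi
  rw [hi, hi]
  cases h1 : v (L.foldr Fm.imp (Fm.imp A B)) with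
  | false => rfl
  | true =>
    cases h2 : v (L.foldr Fm.imp A) with
    | false => rfl
    | true =>
      have h3 : v (L.foldr Fm.imp B) = true := by
        apply (foldr_eval v hi L B).mpr
        intro hall
        have hab := (foldr_eval v hi L (Fm.imp A B)).mp h1 hall
        have ha := (foldr_eval v hi L A).mp h2 hall
        rw [hi, ha] at hab
        simpa using hab
      rw [h3]; rfl

lemma D_weaken {L M : List Fm} {B : Fm} (hsub : ∀ x ∈ L, x ∈ M)
    (h : Deriv JNoCAxiom CS (L.foldr Fm.imp B)) :
    Deriv JNoCAxiom CS (M.foldr Fm.imp B) :=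
  Deriv.mp (Deriv.ax (JNoCAxiom.cl (taut_weaken B hsub))) h

lemma D_foldr_mp {L : List Fm} {A B : Fm}
    (h1 : Deriv JNoCAxiom CS (L.foldr Fm.imp (Fm.imp A B)))
    (h2 : Deriv JNoCAxiom CS (L.foldr Fm.imp A)) :
    Deriv JNoCAxiom CS (L.foldr Fm.imp B) :=
  Deriv.mp (Deriv.mp (Deriv.ax (JNoCAxiom.cl (taut_foldr_mp L A B))) h1) h2

lemma taut_id (A : Fm) : IsTaut (Fm.imp A A) := by
  intro v hb hi; rw [hi]; cases v A <;> rfl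

lemma taut_k (A B : Fm) : IsTaut (Fm.imp B (Fm.imp A B)) := by
  intro v hb hi; rw [hi, hi]; cases v A <;> cases v B <;> rfl

lemma taut_exfalso (F G : Fm) : IsTaut (Fm.imp (Fm.imp F Fm.bot) (Fm.imp F G)) := by
  intro v hb hi; rw [hi, hi, hi, hb]; cases v F <;> cases v G <;> rfl

lemma taut_or_inl (P Q : Fm) : IsTaut (Fm.imp P (Fm.disj P Q)) := by
  intro v hb hi
  simp only [Fm.disj, Fm.neg, hi, hb]
  cases v P <;> cases v Q <;> rfl

lemma taut_noc_elim (P Q : Fm) :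
    IsTaut (Fm.imp (Fm.neg (Fm.conj P Q)) (Fm.imp P (Fm.imp Q Fm.bot))) := by
  intro v hb hi
  simp only [Fm.neg, Fm.conj, hi, hb]
  cases v P <;> cases v Q <;> rfl

variable {Γ : Set Fm}

lemma sd_of_deriv {A : Fm} (h : Deriv JNoCAxiom CS A) : SD CS Γ A :=
  ⟨[], by simp, h⟩

lemma sd_of_mem {A : Fm} (h : A ∈ Γ) : SD CS Γ A :=
  ⟨[A], by simpa using h, Deriv.ax (JNoCAxiom.cl (taut_id A))⟩

lemma sd_mp {A B : Fm} (h1 : SD CS Γ (Fm.imp A B)) (h2 : SD CS Γ A) : SD CS Γ B := by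
  obtain ⟨L1, hs1, hd1⟩ := h1
  obtain ⟨L2, hs2, hd2⟩ := h2
  refine ⟨L1 ++ L2, ?_, ?_⟩
  · intro x hx
    rcases List.mem_append.mp hx with hx | hx
    · exact hs1 x hx
    · exact hs2 x hx
  · exact D_foldr_mp CS
      (D_weaken CS (fun x hx => List.mem_append.mpr (Or.inl hx)) hd1)
      (D_weaken CS (fun x hx => List.mem_append.mpr (Or.inr hx)) hd2)

lemma sd_foldr {B : Fm} :
    ∀ L : List Fm, (∀ x ∈ L, SD CS Γ x) → SD CS Γ (L.foldr Fm.imp B) → SD CS Γ B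
  | [], _, h => h
  | a :: L, hall, h =>
      sd_foldr L (fun x hx => hall x (List.mem_cons_of_mem a hx))
        (sd_mp CS h (hall a (List.mem_cons_self)))

/-- Deduction theorem for set derivability. -/
lemma sd_deduction {A B : Fm} (h : SD CS (insert A Γ) B) : SD CS Γ (Fm.imp A B) := by
  obtain ⟨L, hs, hd⟩ := h
  refine ⟨L.filter (fun x => x ≠ A), ?_, ?_⟩
  · intro x hx
    rw [List.mem_filter] at hx
    rcases hs x hx.1 with h | h
    · exact absurd h (by simpa using hx.2)
    · exact h
  · have hsub : ∀ x ∈ L, x ∈ L.filter (fun x => x ≠ A) ++ [A] := by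
      intro x hx
      by_cases hxA : x = A
      · exact List.mem_append.mpr (Or.inr (by simp [hxA]))
      · exact List.mem_append.mpr (Or.inl (List.mem_filter.mpr ⟨hx, by simpa using hxA⟩))
    have := D_weaken CS hsub hd
    rwa [List.foldr_append] at this

lemma mcs_closed (hm : MaxConsistent JNoCAxiom CS Γ) {A : Fm} (h : SD CS Γ A) : A ∈ Γ := by
  by_contra hA
  have hincon := hm.2 _ (Set.ssubset_insert hA)
  have hP : SD CS (insert A Γ) Fm.bot := by
    by_contra hq; exact hincon hq
  obtain ⟨L, hs, hd⟩ := hP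
  apply hm.1
  refine sd_foldr CS L ?_ (sd_of_deriv CS hd)
  intro x hx
  rcases hs x hx with rfl | hxΓ
  · exact h
  · exact sd_of_mem CS hxΓ

lemma mcs_not_bot (hm : MaxConsistent JNoCAxiom CS Γ) : Fm.bot ∉ Γ :=
  fun h => hm.1 (sd_of_mem CS h)

lemma mcs_not_both (hm : MaxConsistent JNoCAxiom CS Γ) {A : Fm}
    (hA : A ∈ Γ) (hnA : Fm.neg A ∈ Γ) : False :=
  hm.1 (sd_mp CS (sd_of_mem CS hnA) (sd_of_mem CS hA))

lemma mcs_neg_total (hm : MaxConsistent JNoCAxiom CS Γ) {A : Fm} (hA : A ∉ Γ) :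
    Fm.neg A ∈ Γ := by
  apply mcs_closed CS hm
  apply sd_deduction CS
  by_contra hq
  exact hm.2 _ (Set.ssubset_insert hA) hq

lemma mcs_imp (hm : MaxConsistent JNoCAxiom CS Γ) (F G : Fm) :
    Fm.imp F G ∈ Γ ↔ (F ∉ Γ ∨ G ∈ Γ) := by
  constructor
  · intro h
    by_cases hF : F ∈ Γ
    · exact Or.inr (mcs_closed CS hm (sd_mp CS (sd_of_mem CS h) (sd_of_mem CS hF)))
    · exact Or.inl hF
  · rintro (hF | hG)
    · exact mcs_closed CS hm (sd_mp CS
        (sd_of_deriv CS (Deriv.ax (JNoCAxiom.cl (taut_exfalso F G))))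
        (sd_of_mem CS (mcs_neg_total CS hm hF)))
    · exact mcs_closed CS hm (sd_mp CS
        (sd_of_deriv CS (Deriv.ax (JNoCAxiom.cl (taut_k F G))))
        (sd_of_mem CS hG))

lemma list_in_chain {c : Set (Set Fm)} (hch : IsChain (· ⊆ ·) c) (hne : c.Nonempty)
    (L : List Fm) : (∀ x ∈ L, x ∈ ⋃₀ c) → ∃ s ∈ c, ∀ x ∈ L, x ∈ s := by
  induction L with
  | nil =>
    intro _
    obtain ⟨s, hs⟩ := hne
    exact ⟨s, hs, by simp⟩
  | cons a L ih =>
    intro h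
    obtain ⟨s, hsc, hLs⟩ := ih (fun x hx => h x (List.mem_cons_of_mem a hx))
    obtain ⟨s', hs'c, has'⟩ := h a (List.mem_cons_self)
    rcases eq_or_ne s s' with rfl | hne'
    · refine ⟨s, hsc, ?_⟩
      intro x hx
      rcases List.mem_cons.mp hx with rfl | hx
      · exact has'
      · exact hLs x hx
    · rcases hch hsc hs'c hne' with hle | hle
      · refine ⟨s', hs'c, ?_⟩
        intro x hx
        rcases List.mem_cons.mp hx with rfl | hx
        · exact has'
        · exact hle (hLs x hx)
      · refine ⟨s, hsc, ?_⟩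
        intro x hx
        rcases List.mem_cons.mp hx with rfl | hx
        · exact hle has'
        · exact hLs x hx

lemma chain_bound {c : Set (Set Fm)} (hc : ∀ s ∈ c, ConsistentSet JNoCAxiom CS s)
    (hch : IsChain (· ⊆ ·) c) (hne : c.Nonempty) :
    ConsistentSet JNoCAxiom CS (⋃₀ c) := by
  rintro ⟨L, hs, hd⟩
  obtain ⟨s, hsc, hLs⟩ := list_in_chain hch hne L hs
  exact hc s hsc ⟨L, hLs, hd⟩

lemma lindenbaum {Γ : Set Fm} (h : ConsistentSet JNoCAxiom CS Γ) :
    ∃ Δ, Γ ⊆ Δ ∧ MaxConsistent JNoCAxiom CS Δ := by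
  obtain ⟨Δ, hsub, hmax⟩ := zorn_subset_nonempty {Δ | ConsistentSet JNoCAxiom CS Δ}
    (fun c hc hch hne =>
      ⟨⋃₀ c, chain_bound CS (fun s hs => hc hs) hch hne,
        fun s hs => Set.subset_sUnion_of_mem hs⟩) Γ h
  refine ⟨Δ, hsub, hmax.1, ?_⟩
  intro Δ' hss hcon'
  have := hmax.2 hcon' hss.1
  exact hss.2 this

lemma mcs_just_iff (hm : MaxConsistent JNoCAxiom CS Γ) (t : Tm) (F : Fm) :
    Fm.just t F ∈ Γ ↔ ∀ Δ : Set Fm, {G | Fm.just t G ∈ Γ} ⊆ Δ → F ∈ Δ :=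
  ⟨fun h Δ hΔ => hΔ h, fun h => h _ (subset_refl _)⟩

lemma canonical_is_noc
    (hne : (canonicalModel JNoCAxiom CS).W0.Nonempty) :
    IsNoCModel CS (canonicalModel JNoCAxiom CS) := by
  constructor
  · refine ⟨hne, ?_⟩
    intro Γ hΓ
    have hm : MaxConsistent JNoCAxiom CS Γ := hΓ
    refine ⟨mcs_not_bot CS hm, fun F G => mcs_imp CS hm F G, ?_, ?_, ?_, ?_⟩
    · -- just condition
      intro t F
      exact mcs_just_iff CS hm t F
    · -- sum condition
      intro s t Δ hΔ
      constructor
      · intro A hA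
        refine hΔ ?_
        show Fm.just (Tm.sum s t) A ∈ Γ
        refine mcs_closed CS hm (sd_mp CS
          (sd_of_deriv CS (Deriv.ax (JNoCAxiom.jplus s t A)))
          (sd_mp CS (sd_of_deriv CS (Deriv.ax (JNoCAxiom.cl
            (taut_or_inl (Fm.just s A) (Fm.just t A))))) (sd_of_mem CS hA)))
      · intro A hA
        refine hΔ ?_
        show Fm.just (Tm.sum s t) A ∈ Γ
        refine mcs_closed CS hm (sd_mp CS
          (sd_of_deriv CS (Deriv.ax (JNoCAxiom.jplus s t A)))
          (sd_mp CS (sd_of_deriv CS (Deriv.ax (JNoCAxiom.cl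
            (taut_k (Fm.neg (Fm.just s A)) (Fm.just t A))))) (sd_of_mem CS hA)))
    · -- app condition
      intro s t Δ hΔ F hF
      obtain ⟨H, hs, ht⟩ := hF
      have hms : ({G | Fm.just s G ∈ Γ} : Set Fm) ∈ (canonicalModel JNoCAxiom CS).E Γ s :=
        fun x hx => hx
      have hmt : ({G | Fm.just t G ∈ Γ} : Set Fm) ∈ (canonicalModel JNoCAxiom CS).E Γ t :=
        fun x hx => hx
      have h1 : Fm.just s (Fm.imp H F) ∈ Γ := hs hms
      have h2 : Fm.just t H ∈ Γ := ht hmt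
      have h3 : Fm.just (Tm.app s t) F ∈ Γ :=
        mcs_closed CS hm (sd_mp CS (sd_mp CS
          (sd_of_deriv CS (Deriv.ax (JNoCAxiom.j s t H F)))
          (sd_of_mem CS h1)) (sd_of_mem CS h2))
      exact hΔ h3
    · -- CS condition
      intro c A hcA
      constructor
      · intro Δ hΔ
        exact hΔ (mcs_closed CS hm (sd_of_deriv CS (Deriv.an 0 hcA)))
      · intro n Δ hΔ
        exact hΔ (mcs_closed CS hm (sd_of_deriv CS (Deriv.an (n + 1) hcA)))
  · -- NoC condition
    intro Γ hΓ t
    have hm : MaxConsistent JNoCAxiom CS Γ := hΓ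
    refine ⟨{F | Fm.just t F ∈ Γ}, ?_, fun x hx => hx⟩
    intro A
    by_contra hq
    push_neg at hq
    obtain ⟨h1, h2⟩ := hq
    have h1' : Fm.just t A ∈ Γ := h1
    have h2' : Fm.just t (Fm.neg A) ∈ Γ := h2
    exact hm.1 (sd_mp CS (sd_mp CS (sd_mp CS
      (sd_of_deriv CS (Deriv.ax (JNoCAxiom.cl
        (taut_noc_elim (Fm.just t A) (Fm.just t (Fm.neg A))))))
      (sd_of_deriv CS (Deriv.ax (JNoCAxiom.noc t A))))
      (sd_of_mem CS h1')) (sd_of_mem CS h2'))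

end Completeness


/-- Completeness of JNoC_CS with respect to NoC CS-subset models, for arbitrary CS. -/



theorem stmt_7 (CS : Set (Nat × Fm)) (hCS : IsConstSpec JNoCAxiom CS)
    (F : Fm) (h : NoCValid CS F) :
    Deriv JNoCAxiom CS F := by
  by_contra hnd
  have hcons : ConsistentSet JNoCAxiom CS {Fm.neg F} := by
    rintro ⟨L, hs, hd⟩
    apply hnd
    have htaut : IsTaut (Fm.imp (L.foldr Fm.imp Fm.bot) F) := by
      intro v hb hi
      rw [hi]
      cases hL : v (L.foldr Fm.imp Fm.bot) with
      | false => rfl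
      | true =>
        cases hF : v F with
        | true => rfl
        | false =>
          have hall : ∀ x ∈ L, v x = true := by
            intro x hx
            have hx' : x = Fm.neg F := hs x hx
            subst hx'
            show v (Fm.imp F Fm.bot) = true
            rw [hi, hF, hb]; rfl
          have := (foldr_eval v hi L Fm.bot).mp hL hall
          rw [hb] at this
          exact absurd this (by simp)
    exact Deriv.mp (Deriv.ax (JNoCAxiom.cl htaut)) hd
  obtain ⟨Γ, hsub, hm⟩ := lindenbaum CS hcons
  have hΓ0 : Γ ∈ (canonicalModel JNoCAxiom CS).W0 := hm
  have hnoc := canonical_is_noc CS ⟨Γ, hΓ0⟩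
  have hF : F ∈ Γ := h _ hnoc Γ hΓ0
  exact mcs_not_both CS hm hF (hsub rfl)
end

section
/- Let CS be an arbitrary constant specification for JNoC. The canonical model M^C = (W^C, W₀^C, V^C, E^C), where W^C is the power set of the set of all formulas, W₀^C is the set of maximal JNoC_CS-consistent sets of formulas, V^C(Γ,F) = 1 iff F ∈ Γ, and E^C(Γ,t) = {Δ ∈ W^C : Δ ⊇ Γ/t} with Γ/t = {F : t:F ∈ Γ}, is a NoC CS-subset model. -/
section Aux

open Classical

/-- Boolean evaluation of foldr of implications. -/
lemma eval_foldr (v : Fm → Bool) (himp : ∀ F G, v (Fm.imp F G) = (!(v F) || v G)) :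
    ∀ (L : List Fm) (A : Fm), v (L.foldr Fm.imp A) = (!(L.all v) || v A)
  | [], A => by simp
  | x :: L, A => by
    simp [himp, eval_foldr v himp L A]
    cases v x <;> simp

/-- Derivability from hypotheses. -/
def DerivFrom (CS : Set (Nat × Fm)) (Γ : Set Fm) (A : Fm) : Prop :=
  ∃ L : List Fm, (∀ x ∈ L, x ∈ Γ) ∧ Deriv JNoCAxiom CS (L.foldr Fm.imp A)

lemma taut_deriv (CS : Set (Nat × Fm)) {A : Fm} (h : IsTaut A) :
    Deriv JNoCAxiom CS A := Deriv.ax (JNoCAxiom.cl h)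

lemma DerivFrom.of_mem (CS : Set (Nat × Fm)) {Γ : Set Fm} {A : Fm} (h : A ∈ Γ) :
    DerivFrom CS Γ A := by
  refine ⟨[A], by simpa using h, taut_deriv CS ?_⟩
  intro v _ hi
  simp only [List.foldr, hi]
  cases v A <;> simp

lemma DerivFrom.of_deriv (CS : Set (Nat × Fm)) {Γ : Set Fm} {A : Fm}
    (h : Deriv JNoCAxiom CS A) : DerivFrom CS Γ A := ⟨[], by simp, h⟩

lemma DerivFrom.mp {CS : Set (Nat × Fm)} {Γ : Set Fm} {A B : Fm}
    (h1 : DerivFrom CS Γ (Fm.imp A B)) (h2 : DerivFrom CS Γ A) : DerivFrom CS Γ B := by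
  obtain ⟨L1, hL1, hd1⟩ := h1
  obtain ⟨L2, hL2, hd2⟩ := h2
  refine ⟨L1 ++ L2, ?_, ?_⟩
  · intro x hx
    rcases List.mem_append.mp hx with h | h
    · exact hL1 x h
    · exact hL2 x h
  · have htaut : IsTaut (Fm.imp (L1.foldr Fm.imp (Fm.imp A B))
        (Fm.imp (L2.foldr Fm.imp A) ((L1 ++ L2).foldr Fm.imp B))) := by
      intro v _ hi
      simp only [hi, eval_foldr v hi, List.all_append]
      cases L1.all v <;> cases L2.all v <;> cases v A <;> cases v B <;> simp
    exact Deriv.mp (Deriv.mp (taut_deriv CS htaut) hd1) hd2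

lemma consistent_iff {CS : Set (Nat × Fm)} {Γ : Set Fm} :
    ConsistentSet JNoCAxiom CS Γ ↔ ¬ DerivFrom CS Γ Fm.bot := Iff.rfl

lemma derivFrom_of_foldr {CS : Set (Nat × Fm)} {Γ : Set Fm} :
    ∀ (L : List Fm) (B : Fm), DerivFrom CS Γ (L.foldr Fm.imp B) →
      (∀ x ∈ L, DerivFrom CS Γ x) → DerivFrom CS Γ B
  | [], B, h, _ => h
  | x :: L, B, h, hx =>
    derivFrom_of_foldr L B (DerivFrom.mp h (hx x (by simp)))
      (fun y hy => hx y (by simp [hy]))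

lemma mem_of_derivFrom {CS : Set (Nat × Fm)} {Γ : Set Fm} {A : Fm}
    (hΓ : MaxConsistent JNoCAxiom CS Γ) (h : DerivFrom CS Γ A) : A ∈ Γ := by
  by_contra hA
  have hsub : Γ ⊂ insert A Γ := Set.ssubset_insert hA
  have hinc := hΓ.2 _ hsub
  rw [consistent_iff, not_not] at hinc
  obtain ⟨L, hL, hd⟩ := hinc
  refine hΓ.1 (derivFrom_of_foldr L Fm.bot (DerivFrom.of_deriv CS hd) ?_)
  intro x hx
  rcases hL x hx with h' | h'
  · exact h' ▸ h
  · exact DerivFrom.of_mem CS h'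

/-- Deduction-style lemma. -/
lemma deduction_aux {CS : Set (Nat × Fm)} {Γ : Set Fm} {A : Fm} :
    ∀ (L : List Fm) (B : Fm), (∀ x ∈ L, x ∈ Γ ∨ x = A) →
      DerivFrom CS Γ (Fm.imp (L.foldr Fm.imp B) (Fm.imp A B))
  | [], B, _ => by
    refine DerivFrom.of_deriv CS (taut_deriv CS ?_)
    intro v _ hi
    simp only [List.foldr, hi]
    cases v A <;> cases v B <;> simp
  | x :: L, B, hmem => by
    have ih := deduction_aux (CS := CS) (Γ := Γ) (A := A) L B
      (fun y hy => hmem y (by simp [hy]))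
    set f := L.foldr Fm.imp B with hf
    rcases hmem x (by simp) with hx | hx
    · have htaut : IsTaut (Fm.imp x (Fm.imp (Fm.imp f (Fm.imp A B))
          (Fm.imp (Fm.imp x f) (Fm.imp A B)))) := by
        intro v _ hi
        simp only [hi]
        cases v x <;> cases v f <;> cases v A <;> cases v B <;> simp
      exact DerivFrom.mp (DerivFrom.mp (DerivFrom.of_deriv CS (taut_deriv CS htaut))
        (DerivFrom.of_mem CS hx)) ih
    · subst hx
      have htaut : IsTaut (Fm.imp (Fm.imp f (Fm.imp x B))
          (Fm.imp (Fm.imp x f) (Fm.imp x B))) := by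
        intro v _ hi
        simp only [hi]
        cases v x <;> cases v f <;> cases v B <;> simp
      exact DerivFrom.mp (DerivFrom.of_deriv CS (taut_deriv CS htaut)) ih

lemma neg_mem_of_not_mem {CS : Set (Nat × Fm)} {Γ : Set Fm} {A : Fm}
    (hΓ : MaxConsistent JNoCAxiom CS Γ) (h : A ∉ Γ) : Fm.imp A Fm.bot ∈ Γ := by
  have hsub : Γ ⊂ insert A Γ := Set.ssubset_insert h
  have hinc := hΓ.2 _ hsub
  rw [consistent_iff, not_not] at hinc
  obtain ⟨L, hL, hd⟩ := hinc
  have hded := deduction_aux (CS := CS) (Γ := Γ) (A := A) L Fm.bot (by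
    intro y hy
    rcases hL y hy with h' | h'
    · exact Or.inr h'
    · exact Or.inl h')
  exact mem_of_derivFrom hΓ (DerivFrom.mp hded (DerivFrom.of_deriv CS hd))

/-- A Boolean valuation witnessing consistency of the logic. -/
def wv : Fm → Bool
  | Fm.prop _ => true
  | Fm.bot => false
  | Fm.imp F G => !wv F || wv G
  | Fm.just _ F => wv F

lemma wv_axiom {A : Fm} (h : JNoCAxiom A) : wv A = true := by
  cases h with
  | cl h => exact h wv rfl (fun _ _ => rfl)
  | jplus s t A =>
    show wv _ = true
    simp only [Fm.disj, Fm.neg, wv]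
    cases wv A <;> simp
  | j s t A B =>
    show wv _ = true
    simp only [wv]
    cases wv A <;> cases wv B <;> simp
  | noc t A =>
    show wv _ = true
    simp only [Fm.conj, Fm.neg, wv]
    cases wv A <;> simp

lemma wv_anFm : ∀ (n : Nat) (c : Tm) (A : Fm), wv (anFm n c A) = wv A
  | 0, c, A => rfl
  | n + 1, c, A => wv_anFm n c A

lemma wv_deriv {CS : Set (Nat × Fm)} (hCS : IsConstSpec JNoCAxiom CS) {A : Fm}
    (h : Deriv JNoCAxiom CS A) : wv A = true := by
  induction h with
  | ax h => exact wv_axiom h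
  | mp h1 h2 ih1 ih2 =>
    have : (!wv _ || wv _) = true := ih1
    rw [ih2] at this
    simpa using this
  | an n hc =>
    rw [wv_anFm]
    exact wv_axiom (hCS _ hc)

lemma empty_consistent {CS : Set (Nat × Fm)} (hCS : IsConstSpec JNoCAxiom CS) :
    ConsistentSet JNoCAxiom CS (∅ : Set Fm) := by
  rintro ⟨L, hL, hd⟩
  have hnil : L = [] := List.eq_nil_iff_forall_not_mem.mpr (fun a ha => hL a ha)
  subst hnil
  have := wv_deriv hCS hd
  simp [wv] at this

lemma chain_bound_s8 {c : Set (Set Fm)}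
    (hchain : IsChain (· ⊆ ·) c) (hne : c.Nonempty) :
    ∀ L : List Fm, (∀ x ∈ L, x ∈ ⋃₀ c) → ∃ Γ ∈ c, ∀ x ∈ L, x ∈ Γ
  | [], _ => ⟨hne.choose, hne.choose_spec, by simp⟩
  | x :: L, hL => by
    obtain ⟨Γ, hΓc, hΓ⟩ := chain_bound_s8 hchain hne L (fun y hy => hL y (by simp [hy]))
    obtain ⟨Δ, hΔc, hxΔ⟩ := hL x (by simp)
    rcases hchain.total hΓc hΔc with h | h
    · exact ⟨Δ, hΔc, by
        intro y hy
        rcases List.mem_cons.mp hy with rfl | hy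
        · exact hxΔ
        · exact h (hΓ y hy)⟩
    · exact ⟨Γ, hΓc, by
        intro y hy
        rcases List.mem_cons.mp hy with rfl | hy
        · exact h hxΔ
        · exact hΓ y hy⟩

lemma exists_mcs {CS : Set (Nat × Fm)} (hCS : IsConstSpec JNoCAxiom CS) :
    ∃ Γ : Set Fm, MaxConsistent JNoCAxiom CS Γ := by
  obtain ⟨m, hm⟩ := zorn_subset_nonempty {Γ : Set Fm | ConsistentSet JNoCAxiom CS Γ}
    (fun c hcS hchain hne => by
      refine ⟨⋃₀ c, ?_, fun s hs => Set.subset_sUnion_of_mem hs⟩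
      rintro ⟨L, hL, hd⟩
      obtain ⟨Γ, hΓc, hΓ⟩ := chain_bound_s8 hchain hne L hL
      exact hcS hΓc ⟨L, hΓ, hd⟩)
    ∅ (empty_consistent hCS)
  refine ⟨m, hm.2.1, ?_⟩
  intro Δ hΔ hΔcons
  exact hΔ.not_subset (hm.2.2 hΔcons hΔ.subset)

end Aux

/-- The canonical model for JNoC_CS is a NoC CS-subset model, for arbitrary CS. -/
theorem stmt_8 (CS : Set (Nat × Fm)) (hCS : IsConstSpec JNoCAxiom CS) :
    IsNoCModel CS (canonicalModel JNoCAxiom CS) := by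
  classical
  have mem_close : ∀ {Γ : Set Fm}, MaxConsistent JNoCAxiom CS Γ → ∀ {A B : Fm},
      Deriv JNoCAxiom CS (Fm.imp A B) → A ∈ Γ → B ∈ Γ := by
    intro Γ hΓ A B hAB hA
    exact mem_of_derivFrom hΓ (DerivFrom.mp (DerivFrom.of_deriv CS hAB)
      (DerivFrom.of_mem CS hA))
  constructor
  · constructor
    · obtain ⟨Γ0, hΓ0⟩ := exists_mcs hCS
      exact ⟨Γ0, hΓ0⟩
    · refine fun (Γ : Set Fm) (hΓ : MaxConsistent JNoCAxiom CS Γ) =>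
        ⟨?_, ?_, ?_, ?_, ?_, ?_⟩
      · -- ⊥ ∉ Γ
        intro h
        exact hΓ.1 (DerivFrom.of_mem CS h)
      · -- implication clause
        intro F G
        constructor
        · intro h
          by_cases hF : F ∈ Γ
          · exact Or.inr (mem_of_derivFrom hΓ (DerivFrom.mp (DerivFrom.of_mem CS h)
              (DerivFrom.of_mem CS hF)))
          · exact Or.inl hF
        · rintro (hF | hG)
          · have hneg : Fm.imp F Fm.bot ∈ Γ := neg_mem_of_not_mem hΓ hF
            refine mem_close hΓ (taut_deriv CS ?_) hneg
            intro v hb hi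
            simp only [hi, hb]
            cases v F <;> cases v G <;> simp
          · refine mem_close hΓ (taut_deriv CS ?_) hG
            intro v _ hi
            simp only [hi]
            cases v F <;> cases v G <;> simp
      · -- justification clause
        intro t F
        constructor
        · intro h
          refine fun (Δ : Set Fm) (hΔ : {G : Fm | Fm.just t G ∈ Γ} ⊆ Δ) => hΔ h
        · intro hE
          exact hE (show {G : Fm | Fm.just t G ∈ Γ} ∈
            (canonicalModel JNoCAxiom CS).E Γ t from Set.Subset.refl _)
      · -- sum clause
        intro s t
        refine fun (Δ : Set Fm) (hΔ : {G : Fm | Fm.just (Tm.sum s t) G ∈ Γ} ⊆ Δ) => ⟨?_, ?_⟩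
        · intro F hF
          refine hΔ (mem_close hΓ (Deriv.ax (JNoCAxiom.jplus s t F)) ?_)
          refine mem_close hΓ (taut_deriv CS ?_) hF
          intro v hb hi
          simp only [Fm.disj, Fm.neg, hi, hb]
          cases v (Fm.just s F) <;> cases v (Fm.just t F) <;> simp
        · intro F hF
          refine hΔ (mem_close hΓ (Deriv.ax (JNoCAxiom.jplus s t F)) ?_)
          refine mem_close hΓ (taut_deriv CS ?_) hF
          intro v hb hi
          simp only [Fm.disj, Fm.neg, hi, hb]
          cases v (Fm.just s F) <;> cases v (Fm.just t F) <;> simp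
      · -- application clause
        intro s t
        refine fun (Δ : Set Fm) (hΔ : {G : Fm | Fm.just (Tm.app s t) G ∈ Γ} ⊆ Δ) => ?_
        intro F hF
        obtain ⟨H, h1, h2⟩ := hF
        have hs : Fm.just s (Fm.imp H F) ∈ Γ :=
          h1 (show {G : Fm | Fm.just s G ∈ Γ} ∈
            (canonicalModel JNoCAxiom CS).E Γ s from Set.Subset.refl _)
        have ht : Fm.just t H ∈ Γ :=
          h2 (show {G : Fm | Fm.just t G ∈ Γ} ∈
            (canonicalModel JNoCAxiom CS).E Γ t from Set.Subset.refl _)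
        exact hΔ (show Fm.just (Tm.app s t) F ∈ Γ from
          mem_of_derivFrom hΓ (DerivFrom.mp (DerivFrom.mp
            (DerivFrom.of_deriv CS (Deriv.ax (JNoCAxiom.j s t H F)))
            (DerivFrom.of_mem CS hs)) (DerivFrom.of_mem CS ht)))
      · -- constant specification clause
        intro c A hc
        constructor
        · refine fun (Δ : Set Fm)
              (hΔ : {G : Fm | Fm.just (Tm.const c) G ∈ Γ} ⊆ Δ) =>
            hΔ (show Fm.just (Tm.const c) A ∈ Γ from
              mem_of_derivFrom hΓ (DerivFrom.of_deriv CS (Deriv.an 0 hc)))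
        · intro n
          refine fun (Δ : Set Fm)
              (hΔ : {G : Fm | Fm.just (bangIter (n + 1) (Tm.const c)) G ∈ Γ} ⊆ Δ) =>
            hΔ (show Fm.just (bangIter (n + 1) (Tm.const c))
                (anFm n (Tm.const c) A) ∈ Γ from
              mem_of_derivFrom hΓ (DerivFrom.of_deriv CS (Deriv.an (n + 1) hc)))
  · -- NoC condition
    refine fun (Γ : Set Fm) (hΓ : MaxConsistent JNoCAxiom CS Γ) (t : Tm) => ?_
    refine ⟨{F : Fm | Fm.just t F ∈ Γ}, ?_, Set.Subset.refl _⟩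
    intro A
    by_contra hcon
    push_neg at hcon
    obtain ⟨hA, hnA⟩ := hcon
    have hA : Fm.just t A ∈ Γ := hA
    have hnA : Fm.just t (Fm.neg A) ∈ Γ := hnA
    have hnoc : Deriv JNoCAxiom CS
        (Fm.neg (Fm.conj (Fm.just t A) (Fm.just t (Fm.neg A)))) :=
      Deriv.ax (JNoCAxiom.noc t A)
    have htaut : IsTaut (Fm.imp
        (Fm.neg (Fm.conj (Fm.just t A) (Fm.just t (Fm.neg A))))
        (Fm.imp (Fm.just t A) (Fm.imp (Fm.just t (Fm.neg A)) Fm.bot))) := by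
      intro v hb hi
      simp only [Fm.neg, Fm.conj, hi, hb]
      cases v (Fm.just t A) <;> cases v (Fm.just t (Fm.imp A Fm.bot)) <;> simp
    exact hΓ.1 (DerivFrom.mp (DerivFrom.mp (DerivFrom.mp
      (DerivFrom.of_deriv CS (taut_deriv CS htaut))
      (DerivFrom.of_deriv CS hnoc))
      (DerivFrom.of_mem CS hA)) (DerivFrom.of_mem CS hnA))
end
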